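/- arXiv:1608.01145 — 3 statements merged into one kernel-verified Lean document; each statement's English description precedes it below -/
import Mathlib

section
/- For every x in [0,1), the series f(x) = Σ_{n=1}^∞ x^n/√n satisfies f(x) ≤ 2/√(1-x) - 2. -/
open Finset

/-- `C(m+1) = 2(2m+1)·catalan m`. -/
lemma my_centralBinom_succ_eq (m : ℕ) :
    Nat.centralBinom (m + 1) = 2 * (2 * m + 1) * catalan m := by
  have h1 := Nat.succ_mul_centralBinom_succ m
  have h2 := succ_mul_catalan_eq_centralBinom m
  have h : (m + 1) * Nat.centralBinom (m + 1)
      = (m + 1) * (2 * (2 * m + 1) * catalan m) := by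
    rw [h1, ← h2]; ring
  exact Nat.eq_of_mul_eq_mul_left (Nat.succ_pos m) h

lemma my_catalan_conv (n : ℕ) :
    ∑ k ∈ range (n + 1), catalan k * catalan (n - k) = catalan (n + 1) := by
  rw [catalan_succ',
    Nat.sum_antidiagonal_eq_sum_range_succ (fun x y => catalan x * catalan y)]

/-- Symmetry trick: `2∑(k+1)·cat k·cat(n-k) = (n+2)·cat(n+1)`. -/
lemma my_two_mul_sum (n : ℕ) :
    2 * ∑ k ∈ range (n + 1), (k + 1) * (catalan k * catalan (n - k))
      = (n + 2) * catalan (n + 1) := by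
  have hrefl : ∑ k ∈ range (n + 1), (k + 1) * (catalan k * catalan (n - k))
      = ∑ k ∈ range (n + 1), (n - k + 1) * (catalan (n - k) * catalan k) := by
    rw [← Finset.sum_range_reflect
      (fun k => (k + 1) * (catalan k * catalan (n - k))) (n + 1)]
    refine Finset.sum_congr rfl fun j hj => ?_
    have hj' : j ≤ n := by
      have := Finset.mem_range.mp hj; omega
    rw [show n + 1 - 1 - j = n - j from by omega, Nat.sub_sub_self hj']
  calc 2 * ∑ k ∈ range (n + 1), (k + 1) * (catalan k * catalan (n - k))
      = ∑ k ∈ range (n + 1), (k + 1) * (catalan k * catalan (n - k))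
        + ∑ k ∈ range (n + 1), (n - k + 1) * (catalan (n - k) * catalan k) := by
        rw [← hrefl]; ring
    _ = ∑ k ∈ range (n + 1), (n + 2) * (catalan k * catalan (n - k)) := by
        rw [← Finset.sum_add_distrib]
        refine Finset.sum_congr rfl fun k hk => ?_
        have hk' : k ≤ n := by
          have := Finset.mem_range.mp hk; omega
        have h : (k + 1) + (n - k + 1) = n + 2 := by omega
        rw [mul_comm (catalan (n - k)) (catalan k), ← add_mul, h]
    _ = (n + 2) * catalan (n + 1) := by
        rw [← Finset.mul_sum, my_catalan_conv]

/-- The key convolution identity: `∑ₖ C(k)·C(n-k) = 4^n`. -/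
lemma my_centralBinom_conv (n : ℕ) :
    ∑ k ∈ range (n + 1), Nat.centralBinom k * Nat.centralBinom (n - k) = 4 ^ n := by
  induction n with
  | zero => simp [Nat.centralBinom]
  | succ n ih =>
    have e1 : ∀ k ∈ range (n + 1),
        Nat.centralBinom k * Nat.centralBinom (n + 1 - k)
          = 2 * (k + 1) * (2 * (n - k) + 1) * (catalan k * catalan (n - k)) := by
      intro k hk
      have hk' : k ≤ n := by have := Finset.mem_range.mp hk; omega
      rw [show n + 1 - k = (n - k) + 1 from by omega, my_centralBinom_succ_eq,
        ← succ_mul_catalan_eq_centralBinom k]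
      ring
    have e2 : ∀ k ∈ range (n + 1),
        4 * (Nat.centralBinom k * Nat.centralBinom (n - k))
          = 2 * (k + 1) * (2 * (n - k) + 1) * (catalan k * catalan (n - k))
            + 2 * ((k + 1) * (catalan k * catalan (n - k))) := by
      intro k hk
      rw [← succ_mul_catalan_eq_centralBinom k,
        ← succ_mul_catalan_eq_centralBinom (n - k)]
      ring
    calc ∑ k ∈ range (n + 2), Nat.centralBinom k * Nat.centralBinom (n + 1 - k)
        = ∑ k ∈ range (n + 1), Nat.centralBinom k * Nat.centralBinom (n + 1 - k)
          + Nat.centralBinom (n + 1) * Nat.centralBinom (n + 1 - (n + 1)) :=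
          Finset.sum_range_succ _ _
      _ = ∑ k ∈ range (n + 1),
            2 * (k + 1) * (2 * (n - k) + 1) * (catalan k * catalan (n - k))
          + (n + 2) * catalan (n + 1) := by
          rw [Finset.sum_congr rfl e1, Nat.sub_self, Nat.centralBinom_zero,
            mul_one, ← succ_mul_catalan_eq_centralBinom (n + 1)]
      _ = ∑ k ∈ range (n + 1),
            (2 * (k + 1) * (2 * (n - k) + 1) * (catalan k * catalan (n - k))
              + 2 * ((k + 1) * (catalan k * catalan (n - k)))) := by
          rw [Finset.sum_add_distrib, ← Finset.mul_sum, my_two_mul_sum]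
      _ = ∑ k ∈ range (n + 1),
            4 * (Nat.centralBinom k * Nat.centralBinom (n - k)) :=
          (Finset.sum_congr rfl e2).symm
      _ = 4 * 4 ^ n := by rw [← Finset.mul_sum, ih]
      _ = 4 ^ (n + 1) := by ring

/-- Lower bound on central binomials: `16^(n+1) ≤ 4(n+1)·C(n+1)²`. -/
lemma my_sixteen_pow_le (n : ℕ) :
    16 ^ (n + 1) ≤ 4 * (n + 1) * Nat.centralBinom (n + 1) ^ 2 := by
  induction n with
  | zero => decide
  | succ n ih =>
    have key := Nat.succ_mul_centralBinom_succ (n + 1)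
    have h1 : (n + 2) * 16 ^ (n + 2)
        ≤ (n + 2) * (4 * (n + 2) * Nat.centralBinom (n + 2) ^ 2) := by
      calc (n + 2) * 16 ^ (n + 2) = 16 * (n + 2) * 16 ^ (n + 1) := by ring
        _ ≤ 16 * (n + 2) * (4 * (n + 1) * Nat.centralBinom (n + 1) ^ 2) :=
            Nat.mul_le_mul_left _ ih
        _ = 16 * (4 * (n + 1) * (n + 2)) * Nat.centralBinom (n + 1) ^ 2 := by ring
        _ ≤ 16 * (2 * n + 3) ^ 2 * Nat.centralBinom (n + 1) ^ 2 := by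
            have h : 4 * (n + 1) * (n + 2) ≤ (2 * n + 3) ^ 2 := by nlinarith
            exact Nat.mul_le_mul_right _ (Nat.mul_le_mul_left _ h)
        _ = 4 * ((n + 2) * Nat.centralBinom (n + 2)) ^ 2 := by rw [key]; ring
        _ = (n + 2) * (4 * (n + 2) * Nat.centralBinom (n + 2) ^ 2) := by ring
    exact Nat.le_of_mul_le_mul_left h1 (by omega)

lemma my_centralBinom_le (n : ℕ) : Nat.centralBinom n ≤ 4 ^ n := by
  have h : (2 * n).choose n ≤ ∑ m ∈ range (2 * n + 1), (2 * n).choose m :=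
    Finset.single_le_sum (fun i _ => Nat.zero_le _)
      (Finset.mem_range.mpr (by omega))
  calc Nat.centralBinom n = (2 * n).choose n := rfl
    _ ≤ ∑ m ∈ range (2 * n + 1), (2 * n).choose m := h
    _ = 2 ^ (2 * n) := Nat.sum_range_choose (2 * n)
    _ = 4 ^ n := by rw [pow_mul]; norm_num

set_option maxHeartbeats 2000000 in
/-- For every `x ∈ [0,1)`, the series `f(x) = ∑_{n=1}^∞ x^n/√n` satisfies
`f(x) ≤ 2/√(1-x) - 2`. -/
theorem stmt0 (x : ℝ) (hx : x ∈ Set.Ico (0:ℝ) 1) :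
    (∑' n : ℕ, x ^ (n + 1) / Real.sqrt (n + 1)) ≤ 2 / Real.sqrt (1 - x) - 2 := by
  obtain ⟨hx0, hx1⟩ := hx
  set c : ℕ → ℝ := fun n => (Nat.centralBinom n : ℝ) / 4 ^ n with hc
  have hc0 : ∀ n, 0 ≤ c n := fun n => by positivity
  have hc1 : ∀ n, c n ≤ 1 := fun n => by
    rw [hc, div_le_one (by positivity)]
    exact_mod_cast my_centralBinom_le n
  have hcx0 : ∀ n, 0 ≤ c n * x ^ n := fun n =>
    mul_nonneg (hc0 n) (pow_nonneg hx0 n)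
  -- summability
  have hgeo : Summable fun n : ℕ => x ^ n := summable_geometric_of_lt_one hx0 hx1
  have hS : Summable fun n : ℕ => c n * x ^ n := by
    refine Summable.of_nonneg_of_le hcx0 (fun n => ?_) hgeo
    calc c n * x ^ n ≤ 1 * x ^ n :=
          mul_le_mul_of_nonneg_right (hc1 n) (pow_nonneg hx0 n)
      _ = x ^ n := one_mul _
  -- Cauchy product: h² = 1/(1-x)
  set h := ∑' n : ℕ, c n * x ^ n with hh
  have hconv : ∀ n : ℕ, ∑ k ∈ range (n + 1), c k * c (n - k) = 1 := by
    intro n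
    have : ∀ k ∈ range (n + 1), c k * c (n - k)
        = (Nat.centralBinom k * Nat.centralBinom (n - k) : ℝ) / 4 ^ n := by
      intro k hk
      have hk' : k ≤ n := by have := Finset.mem_range.mp hk; omega
      rw [hc]
      rw [div_mul_div_comm, ← pow_add, show k + (n - k) = n from by omega]
    rw [Finset.sum_congr rfl this, ← Finset.sum_div]
    have hcast : (∑ k ∈ range (n + 1),
        (Nat.centralBinom k * Nat.centralBinom (n - k) : ℝ)) = ((4:ℝ) ^ n) := by
      exact_mod_cast my_centralBinom_conv n
    rw [hcast]
    exact div_self (by positivity)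
  have hnorm : Summable fun n : ℕ => ‖c n * x ^ n‖ := by
    refine hS.congr fun n => ?_
    rw [Real.norm_eq_abs, abs_of_nonneg (hcx0 n)]
  have hsq : h * h = (1 - x)⁻¹ := by
    rw [hh, tsum_mul_tsum_eq_tsum_sum_range_of_summable_norm hnorm hnorm]
    have : ∀ n : ℕ, ∑ k ∈ range (n + 1), (c k * x ^ k) * (c (n - k) * x ^ (n - k))
        = x ^ n := by
      intro n
      have e : ∀ k ∈ range (n + 1),
          (c k * x ^ k) * (c (n - k) * x ^ (n - k)) = (c k * c (n - k)) * x ^ n := by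
        intro k hk
        have hk' : k ≤ n := by have := Finset.mem_range.mp hk; omega
        rw [show (c k * x ^ k) * (c (n - k) * x ^ (n - k))
            = (c k * c (n - k)) * (x ^ k * x ^ (n - k)) from by ring,
          ← pow_add, show k + (n - k) = n from by omega]
      rw [Finset.sum_congr rfl e, ← Finset.sum_mul, hconv, one_mul]
    rw [tsum_congr this, tsum_geometric_of_lt_one hx0 hx1]
  have h1x : (0:ℝ) < 1 - x := by linarith
  have hhnn : 0 ≤ h := tsum_nonneg hcx0
  have hval : h = 1 / Real.sqrt (1 - x) := by
    have : Real.sqrt (h * h) = Real.sqrt ((1 - x)⁻¹) := by rw [hsq]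
    rw [Real.sqrt_mul_self hhnn, Real.sqrt_inv] at this
    rw [this, one_div]
  -- shift: ∑' c(n+1)x^(n+1) = h - 1
  have hshift : (∑' n : ℕ, c (n + 1) * x ^ (n + 1)) = h - 1 := by
    have := Summable.tsum_eq_zero_add hS
    rw [hh, this]; simp [hc]
  have hSshift : Summable fun n : ℕ => c (n + 1) * x ^ (n + 1) :=
    (summable_nat_add_iff 1).mpr hS
  -- termwise bound: x^(n+1)/√(n+1) ≤ 2·c(n+1)·x^(n+1)
  have hterm : ∀ n : ℕ, x ^ (n + 1) / Real.sqrt (n + 1)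
      ≤ 2 * (c (n + 1) * x ^ (n + 1)) := by
    intro n
    have hs : (0:ℝ) < Real.sqrt (n + 1) := Real.sqrt_pos.mpr (by positivity)
    have hkey : (4:ℝ) ^ (n + 1) ≤ 2 * Real.sqrt (n + 1) * Nat.centralBinom (n + 1) := by
      have hBB := my_sixteen_pow_le n
      have hsq' : ((4:ℝ) ^ (n + 1)) ^ 2
          ≤ (2 * Real.sqrt (n + 1) * Nat.centralBinom (n + 1)) ^ 2 := by
        have e1 : ((4:ℝ) ^ (n + 1)) ^ 2 = 16 ^ (n + 1) := by
          rw [← pow_mul, mul_comm, pow_mul]; norm_num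
        have e2 : (2 * Real.sqrt (n + 1) * (Nat.centralBinom (n + 1) : ℝ)) ^ 2
            = 4 * (n + 1) * (Nat.centralBinom (n + 1) : ℝ) ^ 2 := by
          rw [mul_pow, mul_pow, Real.sq_sqrt (by positivity : (0:ℝ) ≤ (n:ℝ) + 1)]
          ring
        rw [e1, e2]
        have : ((16:ℝ)) ^ (n + 1) ≤ 4 * ((n:ℝ) + 1) * (Nat.centralBinom (n + 1) : ℝ) ^ 2 := by
          exact_mod_cast hBB
        exact this
      have := Real.sqrt_le_sqrt hsq'
      rwa [Real.sqrt_sq (by positivity), Real.sqrt_sq (by positivity)] at this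
    have hinv : 1 / Real.sqrt (n + 1) ≤ 2 * c (n + 1) := by
      rw [hc, div_le_iff₀ hs]
      show (1:ℝ) ≤ 2 * ((Nat.centralBinom (n+1) : ℝ) / 4 ^ (n+1)) * Real.sqrt (n + 1)
      rw [show 2 * ((Nat.centralBinom (n+1) : ℝ) / 4 ^ (n+1)) * Real.sqrt (n + 1)
          = (2 * Real.sqrt (n + 1) * Nat.centralBinom (n + 1)) / 4 ^ (n+1) from by ring,
        le_div_iff₀ (by positivity), one_mul]
      exact hkey
    calc x ^ (n + 1) / Real.sqrt (n + 1) = (1 / Real.sqrt (n + 1)) * x ^ (n + 1) := by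
          ring
      _ ≤ (2 * c (n + 1)) * x ^ (n + 1) :=
          mul_le_mul_of_nonneg_right hinv (pow_nonneg hx0 _)
      _ = 2 * (c (n + 1) * x ^ (n + 1)) := by ring
  have hSf : Summable fun n : ℕ => x ^ (n + 1) / Real.sqrt (n + 1) := by
    refine Summable.of_nonneg_of_le (fun n => by positivity) hterm ?_
    exact hSshift.mul_left 2
  calc (∑' n : ℕ, x ^ (n + 1) / Real.sqrt (n + 1))
      ≤ ∑' n : ℕ, 2 * (c (n + 1) * x ^ (n + 1)) :=
        Summable.tsum_le_tsum hterm hSf (hSshift.mul_left 2)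
    _ = 2 * (h - 1) := by rw [tsum_mul_left, hshift]
    _ = 2 / Real.sqrt (1 - x) - 2 := by rw [hval]; ring
end

section
/- For all real x and y with y ≠ x and y ≠ -x, the integral Δ_y(x) = (1/√(2π)) ∫_0^∞ e^{-t}/(1-e^{-2t})^{3/2} · (y - e^{-t}x) · exp(-(y - e^{-t}x)²/(2(1-e^{-2t}))) dt equals e^{(x²-y²)/2} (Φ(x) - 1_{x>y}), where Φ is the standard Gaussian CDF. -/
/-- The standard Gaussian distribution function. -/
noncomputable def gaussCDF (x : ℝ) : ℝ :=
  (Real.sqrt (2 * Real.pi))⁻¹ * ∫ τ in Set.Iic x, Real.exp (-τ ^ 2 / 2)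

open Real MeasureTheory Set Filter
open scoped Topology

noncomputable def psi (z : ℝ) : ℝ := ∫ τ in Set.Iic z, Real.exp (-τ ^ 2 / 2)

lemma gauss_cont : Continuous fun τ : ℝ => Real.exp (-τ ^ 2 / 2) := by continuity

lemma gauss_integrable : Integrable fun τ : ℝ => Real.exp (-τ ^ 2 / 2) := by
  have h := integrable_exp_neg_mul_sq (show (0:ℝ) < 1/2 by norm_num)
  have e : (fun τ : ℝ => Real.exp (-τ ^ 2 / 2)) = fun x : ℝ => Real.exp (-(1/2) * x ^ 2) := by
    funext τ; congr 1; ring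
  rw [e]; exact h

lemma gauss_total : (∫ τ : ℝ, Real.exp (-τ ^ 2 / 2)) = Real.sqrt (2 * Real.pi) := by
  have e : (fun τ : ℝ => Real.exp (-τ ^ 2 / 2)) = fun x : ℝ => Real.exp (-(1/2) * x ^ 2) := by
    funext τ; congr 1; ring
  rw [e, integral_gaussian]; congr 1; ring

lemma psi_eq (z : ℝ) : psi z = psi 0 + ∫ t in (0:ℝ)..z, Real.exp (-t ^ 2 / 2) := by
  have h := intervalIntegral.integral_Iic_sub_Iic (gauss_integrable.integrableOn (s := Set.Iic 0))
    (gauss_integrable.integrableOn (s := Set.Iic z))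
  simp only [psi]; linarith

lemma psi_hasDeriv (z : ℝ) : HasDerivAt psi (Real.exp (-z ^ 2 / 2)) z := by
  have h : HasDerivAt (fun u => ∫ t in (0:ℝ)..u, Real.exp (-t ^ 2 / 2))
      (Real.exp (-z ^ 2 / 2)) z :=
    intervalIntegral.integral_hasDerivAt_right gauss_integrable.intervalIntegrable
      (gauss_cont.stronglyMeasurableAtFilter _ _) gauss_cont.continuousAt
  have h2 := h.const_add (psi 0)
  have e : (fun u => psi 0 + ∫ t in (0:ℝ)..u, Real.exp (-t ^ 2 / 2)) = psi := by
    funext u; rw [psi_eq u]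
  rwa [e] at h2

lemma psi_cont : Continuous psi :=
  continuous_iff_continuousAt.mpr fun z => (psi_hasDeriv z).continuousAt

lemma psi_tendsto_atTop : Tendsto psi atTop (𝓝 (Real.sqrt (2 * Real.pi))) := by
  have h := tendsto_setIntegral_of_monotone (s := fun z : ℝ => Set.Iic z)
    (fun z => measurableSet_Iic) (fun a b hab => Iic_subset_Iic.mpr hab)
    (by rw [iUnion_Iic]; exact gauss_integrable.integrableOn)
  rw [iUnion_Iic] at h
  unfold psi
  simpa [psi, gauss_total, Measure.restrict_univ] using h

lemma psi_tendsto_atBot : Tendsto psi atBot (𝓝 0) := by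
  have h := tendsto_setIntegral_of_monotone (s := fun z : ℝ => Set.Ioi (-z))
    (fun z => measurableSet_Ioi)
    (fun a b hab => Ioi_subset_Ioi (neg_le_neg hab))
    (by
      have : ⋃ z : ℝ, Set.Ioi (-z) = univ := by
        apply eq_univ_iff_forall.mpr
        intro w; exact mem_iUnion.mpr ⟨-w + 1, by simp only [mem_Ioi]; linarith⟩
      rw [this]; exact gauss_integrable.integrableOn)
  have hU : ⋃ z : ℝ, Set.Ioi (-z) = univ := by
    apply eq_univ_iff_forall.mpr
    intro w; exact mem_iUnion.mpr ⟨-w + 1, by simp only [mem_Ioi]; linarith⟩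
  rw [hU] at h
  simp only [Measure.restrict_univ] at h
  have h2 : Tendsto (fun z : ℝ => psi (-z)) atTop (𝓝 0) := by
    have hsplit : ∀ z : ℝ, psi (-z) =
        (∫ τ : ℝ, Real.exp (-τ ^ 2 / 2)) - ∫ τ in Set.Ioi (-z), Real.exp (-τ ^ 2 / 2) := by
      intro z
      have := intervalIntegral.integral_Iic_add_Ioi (b := -z)
        gauss_integrable.integrableOn gauss_integrable.integrableOn
      simp only [psi]; linarith
    simp only [hsplit]
    have := (tendsto_const_nhds (x := ∫ τ : ℝ, Real.exp (-τ ^ 2 / 2)) (f := atTop (α := ℝ))).sub h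
    simpa using this
  have h3 := h2.comp tendsto_neg_atBot_atTop
  have he : (fun z : ℝ => psi (- -z)) = psi := by funext z; rw [neg_neg]
  rw [Function.comp_def] at h3
  rwa [he] at h3

lemma expneg_deriv (t : ℝ) : HasDerivAt (fun t : ℝ => Real.exp (-t)) (-Real.exp (-t)) t := by
  simpa [Function.comp_def] using (Real.hasDerivAt_exp (-t)).comp t ((hasDerivAt_id t).neg)

lemma expneg2_deriv (t : ℝ) :
    HasDerivAt (fun t : ℝ => Real.exp (-2 * t)) (-2 * Real.exp (-2 * t)) t := by
  have h := (Real.hasDerivAt_exp (-2 * t)).comp t ((hasDerivAt_id t).const_mul (-2))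
  simpa [Function.comp_def, mul_comm] using h

lemma hee (t : ℝ) : Real.exp (-2 * t) = Real.exp (-t) ^ 2 := by
  rw [sq, ← Real.exp_add]; congr 1; ring

lemma hvpos {t : ℝ} (ht : 0 < t) : 0 < 1 - Real.exp (-2 * t) := by
  have : Real.exp (-2 * t) < 1 := Real.exp_lt_one_iff.mpr (by linarith)
  linarith

lemma r_deriv (x y : ℝ) {t : ℝ} (ht : 0 < t) :
    HasDerivAt (fun t : ℝ => (x - Real.exp (-t) * y) / Real.sqrt (1 - Real.exp (-2 * t)))
      (Real.exp (-t) * (y - Real.exp (-t) * x) /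
        ((1 - Real.exp (-2 * t)) * Real.sqrt (1 - Real.exp (-2 * t)))) t := by
  have hv : 0 < 1 - Real.exp (-2 * t) := hvpos ht
  have hs : 0 < Real.sqrt (1 - Real.exp (-2 * t)) := Real.sqrt_pos.mpr hv
  have hN : HasDerivAt (fun t : ℝ => x - Real.exp (-t) * y) (Real.exp (-t) * y) t := by
    have := ((expneg_deriv t).mul_const y).const_sub x
    simpa using this
  have hv' : HasDerivAt (fun t : ℝ => 1 - Real.exp (-2 * t)) (2 * Real.exp (-2 * t)) t := by
    have := (expneg2_deriv t).const_sub 1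
    simpa using this
  have hD : HasDerivAt (fun t : ℝ => Real.sqrt (1 - Real.exp (-2 * t)))
      (1 / (2 * Real.sqrt (1 - Real.exp (-2 * t))) * (2 * Real.exp (-2 * t))) t :=
    (Real.hasDerivAt_sqrt hv.ne').comp t hv'
  have hdiv : HasDerivAt (fun t : ℝ => (x - Real.exp (-t) * y) / Real.sqrt (1 - Real.exp (-2 * t))) _ t := hN.div hD hs.ne'
  convert hdiv using 1
  rw [Real.sq_sqrt hv.le]
  have h2 : Real.sqrt (1 - Real.exp (-2 * t)) ^ 2 = 1 - Real.exp (-2 * t) := Real.sq_sqrt hv.le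
  rw [hee] at h2 ⊢
  rw [hee] at hs hv
  field_simp
  linear_combination (-y) * h2

lemma abs_exp_bound (z : ℝ) : |z| * Real.exp (-z ^ 2 / 2) ≤ 1 := by
  have h1 : |z| ≤ Real.exp (z ^ 2 / 2) := by
    nlinarith [sq_abs z, sq_nonneg (|z| - 1), Real.add_one_le_exp (z ^ 2 / 2), abs_nonneg z]
  have h2 : Real.exp (-z ^ 2 / 2) = (Real.exp (z ^ 2 / 2))⁻¹ := by
    rw [← Real.exp_neg]; congr 1; ring
  rw [h2, mul_inv_le_iff₀ (Real.exp_pos _)]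
  simpa using h1

lemma cube_exp_bound {z : ℝ} (hz : 0 ≤ z) : z ^ 3 * Real.exp (-z ^ 2 / 2) ≤ 8 := by
  rcases le_or_gt z 2 with h | h
  · have h1 : Real.exp (-z ^ 2 / 2) ≤ 1 := Real.exp_le_one_iff.mpr (by nlinarith [sq_nonneg z])
    nlinarith [Real.exp_pos (-z ^ 2 / 2), pow_nonneg hz 3]
  · have h4 : z ^ 2 / 4 ≤ Real.exp (z ^ 2 / 4) :=
      le_trans (by linarith [sq_nonneg z]) (Real.add_one_le_exp _)
    have h5 : (z ^ 2 / 4) ^ 2 ≤ Real.exp (z ^ 2 / 4) ^ 2 :=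
      pow_le_pow_left₀ (by positivity) h4 2
    have h6 : Real.exp (z ^ 2 / 4) ^ 2 = Real.exp (z ^ 2 / 2) := by
      rw [sq, ← Real.exp_add]; congr 1; ring
    have h7 : Real.exp (-z ^ 2 / 2) = (Real.exp (z ^ 2 / 2))⁻¹ := by
      rw [← Real.exp_neg]; congr 1; ring
    rw [h7, mul_inv_le_iff₀ (Real.exp_pos _)]
    nlinarith [h5, h6, Real.exp_pos (z ^ 2 / 2)]

lemma point_bound_small {a v : ℝ} (ha : a ≠ 0) (hv : 0 < v) :
    |a * Real.exp (-a ^ 2 / (2 * v)) / (v * Real.sqrt v)| ≤ 8 / a ^ 2 := by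
  have hs : 0 < Real.sqrt v := Real.sqrt_pos.mpr hv
  have hsq : Real.sqrt v ^ 2 = v := Real.sq_sqrt hv.le
  have hvv : 0 < v * Real.sqrt v := by positivity
  set B := |a| / Real.sqrt v with hB
  have hBe : -B ^ 2 / 2 = -a ^ 2 / (2 * v) := by
    rw [hB, div_pow, sq_abs, hsq]; ring
  have key := cube_exp_bound (show 0 ≤ B by positivity)
  rw [hBe] at key
  rw [abs_div, abs_mul, abs_of_pos (Real.exp_pos _), abs_of_pos hvv,
    div_le_div_iff₀ hvv (by positivity : (0:ℝ) < a ^ 2)]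
  have hmul := mul_le_mul_of_nonneg_right key hvv.le
  have heq : B ^ 3 * Real.exp (-a ^ 2 / (2 * v)) * (v * Real.sqrt v)
      = |a| * Real.exp (-a ^ 2 / (2 * v)) * a ^ 2 := by
    rw [hB, div_pow]
    have h3 : Real.sqrt v ^ 3 = v * Real.sqrt v := by
      rw [pow_succ, hsq]
    have haa : |a| ^ 3 = |a| * a ^ 2 := by
      rw [pow_succ', sq_abs]
    rw [h3, haa]
    field_simp
  rw [heq] at hmul
  linarith

lemma point_bound_one {a v : ℝ} (hv : 0 < v) :
    |a * Real.exp (-a ^ 2 / (2 * v)) / (v * Real.sqrt v)| ≤ 1 / v := by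
  have hs : 0 < Real.sqrt v := Real.sqrt_pos.mpr hv
  have hsq : Real.sqrt v ^ 2 = v := Real.sq_sqrt hv.le
  have hvv : 0 < v * Real.sqrt v := by positivity
  set B := |a| / Real.sqrt v with hB
  have hBe : -B ^ 2 / 2 = -a ^ 2 / (2 * v) := by
    rw [hB, div_pow, sq_abs, hsq]; ring
  have key := abs_exp_bound B
  rw [abs_of_nonneg (by positivity : (0:ℝ) ≤ B), hBe] at key
  rw [abs_div, abs_mul, abs_of_pos (Real.exp_pos _), abs_of_pos hvv,
    div_le_div_iff₀ hvv hv]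
  have hmul := mul_le_mul_of_nonneg_right key hvv.le
  have heq : B * Real.exp (-a ^ 2 / (2 * v)) * (v * Real.sqrt v)
      = |a| * Real.exp (-a ^ 2 / (2 * v)) * v := by
    rw [hB]; field_simp
  rw [heq] at hmul
  linarith
noncomputable def rr (x y t : ℝ) : ℝ :=
  (x - Real.exp (-t) * y) / Real.sqrt (1 - Real.exp (-2 * t))

noncomputable def gg (x y t : ℝ) : ℝ :=
  Real.exp (-(rr x y t) ^ 2 / 2) *
    (Real.exp (-t) * (y - Real.exp (-t) * x) /
      ((1 - Real.exp (-2 * t)) * Real.sqrt (1 - Real.exp (-2 * t))))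

noncomputable def fs (x y t : ℝ) : ℝ :=
  Real.exp (-t) * (y - Real.exp (-t) * x) /
      ((1 - Real.exp (-2 * t)) * Real.sqrt (1 - Real.exp (-2 * t))) *
    Real.exp (-(y - Real.exp (-t) * x) ^ 2 / (2 * (1 - Real.exp (-2 * t))))

lemma rr_hasDeriv (x y : ℝ) {t : ℝ} (ht : 0 < t) :
    HasDerivAt (rr x y)
      (Real.exp (-t) * (y - Real.exp (-t) * x) /
        ((1 - Real.exp (-2 * t)) * Real.sqrt (1 - Real.exp (-2 * t)))) t := by
  exact r_deriv x y ht

lemma gg_hasDeriv (x y : ℝ) {t : ℝ} (ht : 0 < t) :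
    HasDerivAt (fun t => psi (rr x y t)) (gg x y t) t := by
  have h := (psi_hasDeriv (rr x y t)).comp t (rr_hasDeriv x y ht)
  simpa [gg, Function.comp_def] using h

lemma fs_eq_gg (x y : ℝ) {t : ℝ} (ht : 0 < t) :
    fs x y t = Real.exp ((x ^ 2 - y ^ 2) / 2) * gg x y t := by
  have hv : 0 < 1 - Real.exp (-2 * t) := hvpos ht
  have hs : 0 < Real.sqrt (1 - Real.exp (-2 * t)) := Real.sqrt_pos.mpr hv
  have hexp : Real.exp (-(y - Real.exp (-t) * x) ^ 2 / (2 * (1 - Real.exp (-2 * t))))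
      = Real.exp ((x ^ 2 - y ^ 2) / 2) * Real.exp (-(rr x y t) ^ 2 / 2) := by
    rw [← Real.exp_add]
    congr 1
    rw [rr, div_pow, Real.sq_sqrt hv.le]
    rw [hee] at hv ⊢
    field_simp
    ring
  rw [fs, hexp, gg]
  ring

lemma fs_contOn (x y : ℝ) : ContinuousOn (fs x y) (Set.Ioi 0) := by
  have hvne : ∀ t ∈ Set.Ioi (0:ℝ),
      (1 - Real.exp (-2 * t)) * Real.sqrt (1 - Real.exp (-2 * t)) ≠ 0 := by
    intro t ht
    have hv := hvpos ht
    have hs := Real.sqrt_pos.mpr hv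
    positivity
  have hv2ne : ∀ t ∈ Set.Ioi (0:ℝ), 2 * (1 - Real.exp (-2 * t)) ≠ 0 := by
    intro t ht
    have hv := hvpos ht
    positivity
  have c1 : Continuous fun t : ℝ => Real.exp (-t) * (y - Real.exp (-t) * x) := by continuity
  have c2 : Continuous fun t : ℝ =>
      (1 - Real.exp (-2 * t)) * Real.sqrt (1 - Real.exp (-2 * t)) := by continuity
  have c3 : Continuous fun t : ℝ => -(y - Real.exp (-t) * x) ^ 2 := by continuity
  have c4 : Continuous fun t : ℝ => 2 * (1 - Real.exp (-2 * t)) := by continuity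
  exact ((c1.continuousOn.div c2.continuousOn hvne).mul
    ((Real.continuous_exp.comp_continuousOn
      (c3.continuousOn.div c4.continuousOn hv2ne))))

lemma fs_integrableOn (x y : ℝ) (h1 : y ≠ x) : IntegrableOn (fs x y) (Set.Ioi 0) := by
  set d := |y - x| with hd
  have hd0 : 0 < d := abs_pos.mpr (sub_ne_zero.mpr h1)
  set T := min 1 (d / (2 * (|x| + 1))) with hT
  have hT0 : 0 < T := lt_min one_pos (by positivity)
  -- lower bound for |y - exp(-t) x| on (0, T]
  have hlow : ∀ t ∈ Set.Ioc (0:ℝ) T, d / 2 ≤ |y - Real.exp (-t) * x| := by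
    intro t ht
    have h1e : 1 - Real.exp (-t) ≤ t := by
      have := Real.add_one_le_exp (-t)
      linarith
    have h0e : 0 ≤ 1 - Real.exp (-t) := by
      have : Real.exp (-t) ≤ 1 := Real.exp_le_one_iff.mpr (by linarith [ht.1])
      linarith
    have habs : |(y - x) - (y - Real.exp (-t) * x)| ≤ |x| * t := by
      have heq : (y - x) - (y - Real.exp (-t) * x) = x * (Real.exp (-t) - 1) := by ring
      rw [heq, abs_mul, abs_of_nonpos (by linarith : Real.exp (-t) - 1 ≤ 0)]
      have : -(Real.exp (-t) - 1) ≤ t := by linarith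
      exact mul_le_mul_of_nonneg_left this (abs_nonneg x) |>.trans
        (le_of_eq rfl)
    have hxt : |x| * t ≤ d / 2 := by
      have ht2 : t ≤ d / (2 * (|x| + 1)) := le_trans ht.2 (min_le_right _ _)
      have hx1 : 0 ≤ |x| := abs_nonneg x
      calc |x| * t ≤ (|x| + 1) * (d / (2 * (|x| + 1))) := by
            apply mul_le_mul (by linarith) ht2 ht.1.le (by linarith)
        _ = d / 2 := by field_simp
    have := abs_sub_abs_le_abs_sub (y - x) (y - Real.exp (-t) * x)
    rw [← hd] at this
    linarith
  -- integrable on Ioc 0 T by constant bound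
  have hIoc : IntegrableOn (fs x y) (Set.Ioc 0 T) := by
    have hbound : ∀ t ∈ Set.Ioc (0:ℝ) T, ‖fs x y t‖ ≤ 32 / d ^ 2 := by
      intro t ht
      have hv : 0 < 1 - Real.exp (-2 * t) := hvpos ht.1
      have ha : y - Real.exp (-t) * x ≠ 0 := by
        intro h0
        have hl := hlow t ht
        rw [h0, abs_zero] at hl
        linarith
      have hfs : fs x y t = Real.exp (-t) *
          ((y - Real.exp (-t) * x) *
            Real.exp (-(y - Real.exp (-t) * x) ^ 2 / (2 * (1 - Real.exp (-2 * t)))) /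
            ((1 - Real.exp (-2 * t)) * Real.sqrt (1 - Real.exp (-2 * t)))) := by
        rw [fs]; ring
      rw [hfs, norm_mul, Real.norm_eq_abs, Real.norm_eq_abs,
        abs_of_pos (Real.exp_pos _)]
      have hb1 := point_bound_small ha hv
      have he1 : Real.exp (-t) ≤ 1 := Real.exp_le_one_iff.mpr (by linarith [ht.1])
      have hla := hlow t ht
      have ha2 : d ^ 2 / 4 ≤ (y - Real.exp (-t) * x) ^ 2 := by
        nlinarith [abs_nonneg (y - Real.exp (-t) * x), sq_abs (y - Real.exp (-t) * x)]
      have h8 : 8 / (y - Real.exp (-t) * x) ^ 2 ≤ 32 / d ^ 2 := by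
        rw [div_le_div_iff₀ (by positivity) (by positivity)]
        nlinarith
      calc Real.exp (-t) * |(y - Real.exp (-t) * x) *
            Real.exp (-(y - Real.exp (-t) * x) ^ 2 / (2 * (1 - Real.exp (-2 * t)))) /
            ((1 - Real.exp (-2 * t)) * Real.sqrt (1 - Real.exp (-2 * t)))|
          ≤ 1 * (8 / (y - Real.exp (-t) * x) ^ 2) := by
            apply mul_le_mul he1 hb1 (abs_nonneg _) zero_le_one
        _ ≤ 32 / d ^ 2 := by rw [one_mul]; exact h8
    apply Integrable.mono' (g := fun _ => 32 / d ^ 2)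
      (integrableOn_const measure_Ioc_lt_top.ne)
      (((fs_contOn x y).mono Set.Ioc_subset_Ioi_self).aestronglyMeasurable measurableSet_Ioc)
    exact (ae_restrict_iff' measurableSet_Ioc).mpr (Filter.Eventually.of_forall hbound)
  -- integrable on Ioi T by exponential bound
  have hIoi : IntegrableOn (fs x y) (Set.Ioi T) := by
    have hvT : 0 < 1 - Real.exp (-2 * T) := hvpos hT0
    have hbound : ∀ t ∈ Set.Ioi T, ‖fs x y t‖ ≤
        (1 - Real.exp (-2 * T))⁻¹ * Real.exp (-t) := by
      intro t ht
      have htpos : 0 < t := lt_trans hT0 ht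
      have hv : 0 < 1 - Real.exp (-2 * t) := hvpos htpos
      have hfs : fs x y t = Real.exp (-t) *
          ((y - Real.exp (-t) * x) *
            Real.exp (-(y - Real.exp (-t) * x) ^ 2 / (2 * (1 - Real.exp (-2 * t)))) /
            ((1 - Real.exp (-2 * t)) * Real.sqrt (1 - Real.exp (-2 * t)))) := by
        rw [fs]; ring
      rw [hfs, norm_mul, Real.norm_eq_abs, Real.norm_eq_abs,
        abs_of_pos (Real.exp_pos _)]
      have hb1 := point_bound_one (a := y - Real.exp (-t) * x) hv
      have hmono : 1 - Real.exp (-2 * T) ≤ 1 - Real.exp (-2 * t) := by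
        have : Real.exp (-2 * t) ≤ Real.exp (-2 * T) :=
          Real.exp_le_exp.mpr (by linarith [ht.out])
        linarith
      have h2 : (1 - Real.exp (-2 * t))⁻¹ ≤ (1 - Real.exp (-2 * T))⁻¹ :=
        inv_anti₀ hvT hmono
      calc Real.exp (-t) * |(y - Real.exp (-t) * x) *
            Real.exp (-(y - Real.exp (-t) * x) ^ 2 / (2 * (1 - Real.exp (-2 * t)))) /
            ((1 - Real.exp (-2 * t)) * Real.sqrt (1 - Real.exp (-2 * t)))|
          ≤ Real.exp (-t) * (1 - Real.exp (-2 * t))⁻¹ := by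
            apply mul_le_mul_of_nonneg_left _ (Real.exp_pos _).le
            rw [one_div] at hb1
            exact hb1
        _ ≤ Real.exp (-t) * (1 - Real.exp (-2 * T))⁻¹ :=
            mul_le_mul_of_nonneg_left h2 (Real.exp_pos _).le
        _ = (1 - Real.exp (-2 * T))⁻¹ * Real.exp (-t) := by ring
    have hbint : IntegrableOn (fun t : ℝ =>
        (1 - Real.exp (-2 * T))⁻¹ * Real.exp (-t)) (Set.Ioi T) := by
      have h0 := exp_neg_integrableOn_Ioi T (show (0:ℝ) < 1 by norm_num)
      have h1 : IntegrableOn (fun t : ℝ => Real.exp (-t)) (Set.Ioi T) := by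
        simpa using h0
      exact h1.const_mul _
    apply Integrable.mono' hbint
      (((fs_contOn x y).mono (fun t ht => lt_trans hT0 ht)).aestronglyMeasurable
        measurableSet_Ioi)
    exact (ae_restrict_iff' measurableSet_Ioi).mpr (Filter.Eventually.of_forall hbound)
  have hunion : Set.Ioc (0:ℝ) T ∪ Set.Ioi T = Set.Ioi 0 := Set.Ioc_union_Ioi_eq_Ioi hT0.le
  have := hIoc.union hIoi
  rwa [hunion] at this

lemma gg_integrableOn (x y : ℝ) (h1 : y ≠ x) : IntegrableOn (gg x y) (Set.Ioi 0) := by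
  have hfs : IntegrableOn
      (fun t => (Real.exp ((x ^ 2 - y ^ 2) / 2))⁻¹ * fs x y t) (Set.Ioi 0) :=
    (fs_integrableOn x y h1).const_mul (Real.exp ((x ^ 2 - y ^ 2) / 2))⁻¹
  apply IntegrableOn.congr_fun hfs _ measurableSet_Ioi
  intro t ht
  simp only []
  rw [fs_eq_gg x y ht, ← mul_assoc, inv_mul_cancel₀ (Real.exp_ne_zero _), one_mul]
lemma rr_tendsto_atTop (x y : ℝ) : Tendsto (rr x y) atTop (𝓝 x) := by
  have hexp : Tendsto (fun t : ℝ => Real.exp (-t)) atTop (𝓝 0) := by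
    have := Real.tendsto_exp_atBot.comp tendsto_neg_atTop_atBot
    simpa [Function.comp_def] using this
  have hexp2 : Tendsto (fun t : ℝ => Real.exp (-2 * t)) atTop (𝓝 0) := by
    have hin : Tendsto (fun t : ℝ => -2 * t) atTop atBot :=
      Tendsto.const_mul_atTop_of_neg (by norm_num : (-2:ℝ) < 0) tendsto_id
    have := Real.tendsto_exp_atBot.comp hin
    simpa [Function.comp_def] using this
  have hnum : Tendsto (fun t : ℝ => x - Real.exp (-t) * y) atTop (𝓝 (x - 0 * y)) :=
    tendsto_const_nhds.sub (hexp.mul_const y)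
  have hden : Tendsto (fun t : ℝ => Real.sqrt (1 - Real.exp (-2 * t))) atTop
      (𝓝 (Real.sqrt (1 - 0))) :=
    (Real.continuous_sqrt.tendsto _).comp (tendsto_const_nhds.sub hexp2)
  have h := hnum.div hden (by norm_num)
  have h2 : Tendsto (rr x y) atTop (𝓝 ((x - 0 * y) / Real.sqrt (1 - 0))) :=
    h.congr fun t => rfl
  simpa using h2

lemma rr_tendsto_zero_right_top {x y : ℝ} (hyx : y < x) :
    Tendsto (rr x y) (𝓝[>] (0:ℝ)) atTop := by
  have hnum : Tendsto (fun t : ℝ => x - Real.exp (-t) * y) (𝓝[>] 0) (𝓝 (x - y)) := by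
    have hc : Continuous fun t : ℝ => x - Real.exp (-t) * y := by continuity
    have h0 := (hc.tendsto 0).mono_left (nhdsWithin_le_nhds (s := Set.Ioi (0:ℝ)))
    simpa using h0
  have hden : Tendsto (fun t : ℝ => Real.sqrt (1 - Real.exp (-2 * t))) (𝓝[>] 0)
      (𝓝[>] 0) := by
    apply tendsto_nhdsWithin_of_tendsto_nhds_of_eventually_within
    · have hc : Continuous fun t : ℝ => Real.sqrt (1 - Real.exp (-2 * t)) := by continuity
      have h0 := (hc.tendsto 0).mono_left (nhdsWithin_le_nhds (s := Set.Ioi (0:ℝ)))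
      simpa using h0
    · filter_upwards [eventually_mem_nhdsWithin] with t ht
      exact Real.sqrt_pos.mpr (hvpos ht)
  have hinv := hden.inv_tendsto_nhdsGT_zero
  have hmul := hnum.pos_mul_atTop (sub_pos.mpr hyx) hinv
  apply hmul.congr
  intro t
  simp [rr, div_eq_mul_inv]

lemma rr_tendsto_zero_right_bot {x y : ℝ} (hxy : x < y) :
    Tendsto (rr x y) (𝓝[>] (0:ℝ)) atBot := by
  have hnum : Tendsto (fun t : ℝ => x - Real.exp (-t) * y) (𝓝[>] 0) (𝓝 (x - y)) := by
    have hc : Continuous fun t : ℝ => x - Real.exp (-t) * y := by continuity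
    have h0 := (hc.tendsto 0).mono_left (nhdsWithin_le_nhds (s := Set.Ioi (0:ℝ)))
    simpa using h0
  have hden : Tendsto (fun t : ℝ => Real.sqrt (1 - Real.exp (-2 * t))) (𝓝[>] 0)
      (𝓝[>] 0) := by
    apply tendsto_nhdsWithin_of_tendsto_nhds_of_eventually_within
    · have hc : Continuous fun t : ℝ => Real.sqrt (1 - Real.exp (-2 * t)) := by continuity
      have h0 := (hc.tendsto 0).mono_left (nhdsWithin_le_nhds (s := Set.Ioi (0:ℝ)))
      simpa using h0
    · filter_upwards [eventually_mem_nhdsWithin] with t ht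
      exact Real.sqrt_pos.mpr (hvpos ht)
  have hinv := hden.inv_tendsto_nhdsGT_zero
  have hmul := hnum.neg_mul_atTop (sub_neg.mpr hxy) hinv
  apply hmul.congr
  intro t
  simp [rr, div_eq_mul_inv]

lemma rpow32 {w : ℝ} (hw : 0 < w) : w ^ ((3:ℝ)/2) = w * Real.sqrt w := by
  rw [Real.sqrt_eq_rpow, show (3:ℝ)/2 = 1 + 1/2 by norm_num, Real.rpow_add hw,
    Real.rpow_one]
/-- For `y ≠ x`, `y ≠ -x`, the integral `Δ_y(x)` equals `e^{(x²-y²)/2}(Φ(x) - 1_{x>y})`. -/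
theorem stmt3 (x y : ℝ) (h1 : y ≠ x) (h2 : y ≠ -x) :
    (Real.sqrt (2 * Real.pi))⁻¹ *
      ∫ t in Set.Ioi (0:ℝ),
        Real.exp (-t) / (1 - Real.exp (-2 * t)) ^ ((3:ℝ)/2) * (y - Real.exp (-t) * x) *
          Real.exp (-(y - Real.exp (-t) * x) ^ 2 / (2 * (1 - Real.exp (-2 * t))))
      = Real.exp ((x ^ 2 - y ^ 2) / 2) * (gaussCDF x - if x > y then 1 else 0) := by
  classical
  set L : ℝ := if x > y then Real.sqrt (2 * Real.pi) else 0 with hL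
  set G : ℝ → ℝ := fun t => if 0 < t then psi (rr x y t) else L with hG
  have hsq2pi : Real.sqrt (2 * Real.pi) ≠ 0 :=
    (Real.sqrt_pos.mpr (by positivity)).ne'
  have hderiv : ∀ t ∈ Set.Ioi (0:ℝ), HasDerivAt G (gg x y t) t := by
    intro t ht
    have base := gg_hasDeriv x y ht
    apply base.congr_of_eventuallyEq
    filter_upwards [eventually_gt_nhds ht] with s hs
    simp [hG, hs]
  have htop : Tendsto G atTop (𝓝 (psi x)) := by
    have hbase := (psi_cont.tendsto x).comp (rr_tendsto_atTop x y)
    apply Tendsto.congr' _ hbase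
    filter_upwards [eventually_gt_atTop (0:ℝ)] with t ht
    simp [hG, Function.comp_def, ht]
  have hlim0 : Tendsto (fun t => psi (rr x y t)) (𝓝[>] (0:ℝ)) (𝓝 L) := by
    rcases lt_or_gt_of_ne h1 with hxy | hxy
    · have h := psi_tendsto_atTop.comp (rr_tendsto_zero_right_top hxy)
      rw [hL, if_pos hxy]
      simpa [Function.comp_def] using h
    · have h := psi_tendsto_atBot.comp (rr_tendsto_zero_right_bot hxy)
      rw [hL, if_neg (not_lt.mpr hxy.le)]
      simpa [Function.comp_def] using h
  have hcw : ContinuousWithinAt G (Set.Ici (0:ℝ)) 0 := by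
    rw [← continuousWithinAt_Ioi_iff_Ici]
    have hG0 : G 0 = L := by simp [hG]
    unfold ContinuousWithinAt
    rw [hG0]
    apply Tendsto.congr' _ hlim0
    filter_upwards [eventually_mem_nhdsWithin] with t ht
    simp [hG, ht.out]
  have key : (∫ t in Set.Ioi (0:ℝ), gg x y t) = psi x - L := by
    have h := integral_Ioi_of_hasDerivAt_of_tendsto hcw hderiv
      (gg_integrableOn x y h1) htop
    rw [h]
    congr 1
    simp [hG]
  have hcongr : (∫ t in Set.Ioi (0:ℝ),
      Real.exp (-t) / (1 - Real.exp (-2 * t)) ^ ((3:ℝ)/2) * (y - Real.exp (-t) * x) *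
        Real.exp (-(y - Real.exp (-t) * x) ^ 2 / (2 * (1 - Real.exp (-2 * t)))))
      = ∫ t in Set.Ioi (0:ℝ), Real.exp ((x ^ 2 - y ^ 2) / 2) * gg x y t := by
    apply setIntegral_congr_fun measurableSet_Ioi
    intro t ht
    have hv := hvpos ht
    simp only []
    rw [rpow32 hv, ← fs_eq_gg x y ht, fs]
    ring
  rw [hcongr, integral_const_mul, key]
  have hind : (Real.sqrt (2 * Real.pi))⁻¹ * L = if x > y then (1:ℝ) else 0 := by
    rw [hL]
    split_ifs with h
    · exact inv_mul_cancel₀ hsq2pi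
    · simp
  have hgc : gaussCDF x = (Real.sqrt (2 * Real.pi))⁻¹ * psi x := rfl
  rw [hgc, ← hind]
  ring
end

section
/- Let σ : [0,1] → (0,∞) satisfy σ(t) ≥ √t / M for some constant M > 0. Then for each n ≥ 2, (1/n!) ∫_{Δ_n} (∫_{s_n^*}^1 σ(t)^{-(n+1)} dt)² ds ≤ C √n M^{2n+2} / (n! (n-1)²) · (1 + 1/n - 4/(n+1)) for some absolute constant C, where Δ_n = {0 ≤ s_1 ≤ ... ≤ s_n ≤ 1} and s_n^* = max(s_1,...,s_n). -/
open MeasureTheory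
open scoped ENNReal NNReal

private lemma aux_arith (m : ℕ) {M fac s : ℝ} (hM : 0 < M) (hfac : 0 < fac) (hs : 1 ≤ s) :
    1 / fac * (2 * M ^ (m + 3) / ((m : ℝ) + 1)) ^ 2 ≤
      24 * s * M ^ (2 * (m + 2) + 2) / (fac * (((m : ℝ) + 2) - 1) ^ 2)
        * (1 + 1 / ((m : ℝ) + 2) - 4 / (((m : ℝ) + 2) + 1)) := by
  have hm : (0:ℝ) ≤ m := Nat.cast_nonneg m
  have hMp : (0:ℝ) < M ^ (m + 3) := pow_pos hM _
  have hexp : M ^ (2 * (m + 2) + 2) = (M ^ (m + 3)) ^ 2 := by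
    rw [← pow_mul]; congr 1; ring
  rw [hexp]
  set P := M ^ (m + 3) with hP
  have h1 : (0:ℝ) < (m:ℝ) + 1 := by linarith
  have h2 : (0:ℝ) < (m:ℝ) + 2 := by linarith
  have h3 : (0:ℝ) < (m:ℝ) + 3 := by linarith
  have e1 : 1 / fac * (2 * P / ((m : ℝ) + 1)) ^ 2 = 4 * P ^ 2 / (fac * ((m:ℝ)+1)^2) := by
    field_simp; ring
  have e2 : 24 * s * P ^ 2 / (fac * (((m : ℝ) + 2) - 1) ^ 2)
        * (1 + 1 / ((m : ℝ) + 2) - 4 / (((m : ℝ) + 2) + 1))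
      = 24 * s * P ^ 2 * (((m:ℝ)+1)^2 / (((m:ℝ)+2)*((m:ℝ)+3))) / (fac * ((m:ℝ)+1)^2) := by
    have : ((m:ℝ)+2) - 1 = (m:ℝ)+1 := by ring
    rw [this]
    have : 1 + 1 / ((m : ℝ) + 2) - 4 / (((m : ℝ) + 2) + 1)
        = ((m:ℝ)+1)^2 / (((m:ℝ)+2)*((m:ℝ)+3)) := by
      field_simp; ring
    rw [this]; ring
  rw [e1, e2]
  apply div_le_div_of_nonneg_right ?_ (by positivity)
  have key : 4 * (((m:ℝ)+2)*((m:ℝ)+3)) ≤ 24 * s * ((m:ℝ)+1)^2 := by nlinarith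
  have hPP : (0:ℝ) < P ^ 2 := by positivity
  have e3 : 24 * s * P ^ 2 * (((m:ℝ)+1)^2 / (((m:ℝ)+2)*((m:ℝ)+3)))
      = 24 * s * ((m:ℝ)+1)^2 * P ^ 2 / (((m:ℝ)+2)*((m:ℝ)+3)) := by ring
  rw [e3, le_div_iff₀ (by positivity)]
  nlinarith [mul_le_mul_of_nonneg_right key hPP.le]

private lemma aux_J (m : ℕ) :
    ∫⁻ s in {s : Fin (m + 2) → ℝ |
        (∀ i, 0 ≤ s i ∧ s i ≤ s (Fin.last (m + 1))) ∧ s (Fin.last (m + 1)) ≤ 1},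
      (ENNReal.ofReal (s (Fin.last (m + 1))) ^ (m + 1))⁻¹ ≤ 1 := by
  set L := Fin.last (m + 1)
  set T : Set (Fin (m + 2) → ℝ) :=
    {s | (∀ i, 0 ≤ s i ∧ s i ≤ s L) ∧ s L ≤ 1} with hT_def
  have hT : MeasurableSet T := by
    have hTeq : T = (⋂ i, ({s : Fin (m+2) → ℝ | 0 ≤ s i} ∩ {s | s i ≤ s L}))
        ∩ {s : Fin (m+2) → ℝ | s L ≤ 1} := by
      ext s
      constructor
      · rintro ⟨h1, h2⟩
        exact ⟨Set.mem_iInter.2 fun i => ⟨(h1 i).1, (h1 i).2⟩, h2⟩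
      · rintro ⟨h1, h2⟩
        exact ⟨fun i => Set.mem_iInter.1 h1 i, h2⟩
    rw [hTeq]
    exact (MeasurableSet.iInter fun i =>
        ((measurableSet_le measurable_const (measurable_pi_apply i)).inter
          (measurableSet_le (measurable_pi_apply i) (measurable_pi_apply L)))).inter
      (measurableSet_le (measurable_pi_apply L) measurable_const)
  set f : (Fin (m + 2) → ℝ) → ℝ≥0∞ := fun s => (ENNReal.ofReal (s L) ^ (m + 1))⁻¹ with hf_def
  set A : Set (ℝ × (Fin (m + 1) → ℝ)) :=
    {p | (0 ≤ p.1 ∧ p.1 ≤ 1) ∧ ∀ j, 0 ≤ p.2 j ∧ p.2 j ≤ p.1} with hA_def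
  have hA : MeasurableSet A := by
    have hAeq : A = ({p : ℝ × (Fin (m+1) → ℝ) | 0 ≤ p.1} ∩ {p | p.1 ≤ 1})
        ∩ ⋂ j, ({p : ℝ × (Fin (m+1) → ℝ) | 0 ≤ p.2 j} ∩ {p | p.2 j ≤ p.1}) := by
      ext p
      constructor
      · rintro ⟨⟨h1, h2⟩, h3⟩
        exact ⟨⟨h1, h2⟩, Set.mem_iInter.2 fun j => ⟨(h3 j).1, (h3 j).2⟩⟩
      · rintro ⟨⟨h1, h2⟩, h3⟩
        exact ⟨⟨h1, h2⟩, fun j => Set.mem_iInter.1 h3 j⟩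
    rw [hAeq]
    exact ((measurableSet_le measurable_const measurable_fst).inter
        (measurableSet_le measurable_fst measurable_const)).inter
      (MeasurableSet.iInter fun j =>
        ((measurableSet_le measurable_const (measurable_snd.eval)).inter
          (measurableSet_le (measurable_snd.eval) measurable_fst)))
  set ψ : ℝ × (Fin (m + 1) → ℝ) → ℝ≥0∞ :=
    A.indicator (fun p => (ENNReal.ofReal p.1 ^ (m + 1))⁻¹) with hψ_def
  have hψ : Measurable ψ :=
    (((ENNReal.measurable_ofReal.comp measurable_fst).pow_const _).inv).indicator hA
  set e := MeasurableEquiv.piFinSuccAbove (fun _ : Fin (m + 2) => ℝ) L with he_def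
  have key : ∀ s, T.indicator f s = ψ (e s) := by
    intro s
    have he : e s = (s L, fun j => s (L.succAbove j)) := rfl
    have hmem : s ∈ T ↔ e s ∈ A := by
      rw [he, hA_def, hT_def]
      simp only [Set.mem_setOf_eq]
      rw [Fin.forall_iff_succAbove L]
      constructor
      · rintro ⟨⟨⟨h1, _⟩, h2⟩, h3⟩
        exact ⟨⟨h1, h3⟩, fun j => (h2 j)⟩
      · rintro ⟨⟨h1, h3⟩, h2⟩
        exact ⟨⟨⟨h1, le_refl _⟩, fun j => h2 j⟩, h3⟩
    by_cases hs : s ∈ T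
    · rw [Set.indicator_of_mem hs, hψ_def, Set.indicator_of_mem (hmem.1 hs)]
      rfl
    · rw [Set.indicator_of_notMem hs, hψ_def,
        Set.indicator_of_notMem (fun h => hs (hmem.2 h))]
  calc ∫⁻ s in T, f s = ∫⁻ s, T.indicator f s := (lintegral_indicator hT f).symm
    _ = ∫⁻ s, ψ (e s) := lintegral_congr key
    _ = ∫⁻ p, ψ p ∂((volume : Measure ℝ).prod (Measure.pi fun _ : Fin (m + 1) => volume)) := by
        rw [volume_pi]
        exact (measurePreserving_piFinSuccAbove (fun _ : Fin (m + 2) => (volume : Measure ℝ)) L).lintegral_comp hψ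
    _ = ∫⁻ u, ∫⁻ y, ψ (u, y) ∂(Measure.pi fun _ : Fin (m + 1) => volume) ∂volume :=
        lintegral_prod ψ hψ.aemeasurable
    _ ≤ ∫⁻ u, (Set.Icc (0:ℝ) 1).indicator 1 u ∂volume := by
        apply lintegral_mono
        intro u
        by_cases hu : 0 ≤ u ∧ u ≤ 1
        · have hval : ∀ y : Fin (m + 1) → ℝ, ψ (u, y) =
              (Set.univ.pi fun _ : Fin (m + 1) => Set.Icc 0 u).indicator
                (fun _ => (ENNReal.ofReal u ^ (m + 1))⁻¹) y := by
            intro y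
            by_cases hy : ∀ j, 0 ≤ y j ∧ y j ≤ u
            · rw [hψ_def, Set.indicator_of_mem (by exact ⟨hu, hy⟩),
                Set.indicator_of_mem (Set.mem_univ_pi.2 fun j => Set.mem_Icc.2 (hy j))]
            · rw [hψ_def, Set.indicator_of_notMem (fun h => hy h.2),
                Set.indicator_of_notMem
                  (fun hc => hy fun j => Set.mem_Icc.1 (Set.mem_univ_pi.1 hc j))]
          calc ∫⁻ y, ψ (u, y) ∂(Measure.pi fun _ : Fin (m + 1) => volume)
              = ∫⁻ y in (Set.univ.pi fun _ : Fin (m + 1) => Set.Icc 0 u),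
                  (ENNReal.ofReal u ^ (m + 1))⁻¹ ∂(Measure.pi fun _ : Fin (m + 1) => volume) := by
                rw [← lintegral_indicator (MeasurableSet.univ_pi fun _ => measurableSet_Icc)]
                exact lintegral_congr hval
            _ = (ENNReal.ofReal u ^ (m + 1))⁻¹ *
                  (Measure.pi fun _ : Fin (m + 1) => volume) (Set.univ.pi fun _ => Set.Icc 0 u) :=
                setLIntegral_const _ _
            _ = (ENNReal.ofReal u ^ (m + 1))⁻¹ * ENNReal.ofReal u ^ (m + 1) := by
                rw [Measure.pi_pi]
                simp [Real.volume_Icc]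
            _ ≤ 1 := ENNReal.inv_mul_le_one _
            _ = (Set.Icc (0:ℝ) 1).indicator 1 u := by
                rw [Set.indicator_of_mem (Set.mem_Icc.2 hu)]; rfl
        · have hval : ∀ y : Fin (m + 1) → ℝ, ψ (u, y) = 0 := by
            intro y
            rw [hψ_def, Set.indicator_of_notMem (fun h => hu h.1)]
          simp only [hval]
          simp
    _ = volume (Set.Icc (0:ℝ) 1) := lintegral_indicator_one measurableSet_Icc
    _ = 1 := by simp [Real.volume_Icc]

/-- If `σ(t) ≥ √t / M` on `[0,1]`, then for `n ≥ 2`,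
`(1/n!) ∫_{Δ_n} (∫_{s_n^*}^1 σ(t)^{-(n+1)} dt)² ds
  ≤ C √n M^{2n+2}/(n! (n-1)²) · (1 + 1/n - 4/(n+1))` for an absolute constant `C`,
where `Δ_n = {0 ≤ s₁ ≤ … ≤ s_n ≤ 1}` and `s_n^* = max(s₁,…,s_n)`. -/
theorem stmt19 :
    ∃ C : ℝ, 0 < C ∧ ∀ M : ℝ, 0 < M → ∀ σ : ℝ → ℝ, Measurable σ →
      (∀ t ∈ Set.Icc (0:ℝ) 1, Real.sqrt t / M ≤ σ t) →
      ∀ n : ℕ, 2 ≤ n →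
        (1 / (n.factorial : ℝ)) *
            ∫ s in {s : Fin n → ℝ | Monotone s ∧ ∀ i, s i ∈ Set.Icc (0:ℝ) 1},
              (∫ t in Set.Icc (⨆ i, s i) 1, (σ t ^ (n + 1))⁻¹) ^ 2
          ≤ C * Real.sqrt n * M ^ (2 * n + 2) / ((n.factorial : ℝ) * ((n : ℝ) - 1) ^ 2)
              * (1 + 1 / (n : ℝ) - 4 / ((n : ℝ) + 1)) := by
  refine ⟨24, by norm_num, ?_⟩
  intro M hM σ hσm hσb n hn
  obtain ⟨m, rfl⟩ : ∃ m, n = m + 2 := ⟨n - 2, by omega⟩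
  set L := Fin.last (m + 1)
  set S : Set (Fin (m + 2) → ℝ) := {s | Monotone s ∧ ∀ i, s i ∈ Set.Icc (0:ℝ) 1} with hS_def
  set h : ℝ → ℝ := fun t => (σ t ^ (m + 2 + 1))⁻¹ with hh_def
  have hhm : Measurable h := (hσm.pow_const _).inv
  set F : (Fin (m + 2) → ℝ) → ℝ := fun s => ∫ t in Set.Icc (⨆ i, s i) 1, h t with hF_def
  have hsupm : Measurable (fun s : Fin (m + 2) → ℝ => ⨆ i, s i) :=
    Measurable.iSup fun i => measurable_pi_apply i
  -- measurability of F
  have hGm : StronglyMeasurable (fun a : ℝ => ∫ t in Set.Icc a 1, h t) := by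
    have heq : (fun a : ℝ => ∫ t in Set.Icc a 1, h t)
        = fun a : ℝ => ∫ t, ({p : ℝ × ℝ | p.1 ≤ p.2 ∧ p.2 ≤ 1}.indicator
            (fun p => h p.2) (a, t)) := by
      funext a
      rw [← integral_indicator measurableSet_Icc]
      congr 1
    rw [heq]
    have hΦ : Measurable ({p : ℝ × ℝ | p.1 ≤ p.2 ∧ p.2 ≤ 1}.indicator (fun p => h p.2)) := by
      apply Measurable.indicator (hhm.comp measurable_snd)
      exact (measurableSet_le measurable_fst measurable_snd).inter
        (measurableSet_le measurable_snd measurable_const)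
    exact hΦ.stronglyMeasurable.integral_prod_right'
  have hFm : Measurable F := hGm.measurable.comp hsupm
  have hSm : MeasurableSet S := by
    have : S = (⋂ (i : Fin (m+2)) (j : Fin (m+2)) (_ : i ≤ j), {s : Fin (m+2) → ℝ | s i ≤ s j})
        ∩ ⋂ i, {s : Fin (m+2) → ℝ | s i ∈ Set.Icc (0:ℝ) 1} := by
      ext s
      simp only [hS_def, Set.mem_setOf_eq, Set.mem_inter_iff, Set.mem_iInter, Monotone]
    rw [this]
    exact ((MeasurableSet.iInter fun i => MeasurableSet.iInter fun j =>
        MeasurableSet.iInter fun _ =>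
          measurableSet_le (measurable_pi_apply i) (measurable_pi_apply j)).inter
      (MeasurableSet.iInter fun i => (measurable_pi_apply i) measurableSet_Icc))
  set c₀ : ℝ := (2 * M ^ (m + 3) / ((m : ℝ) + 1)) ^ 2 with hc₀_def
  have hc₀pos : 0 < c₀ := by positivity
  set W : (Fin (m + 2) → ℝ) → ℝ≥0∞ :=
    fun s => ENNReal.ofReal c₀ * (ENNReal.ofReal (s L) ^ (m + 1))⁻¹ with hW_def
  have hWm : Measurable W :=
    measurable_const.mul (((ENNReal.measurable_ofReal.comp (measurable_pi_apply L)).pow_const _).inv)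
  -- the pointwise bound
  have hpoint : ∀ s ∈ S, ENNReal.ofReal (F s ^ 2) ≤ W s := by
    intro s hs
    set a : ℝ := s L with ha_def
    have hsup_eq : (⨆ i, s i) = a :=
      le_antisymm (ciSup_le fun i => hs.1 (Fin.le_last i))
        (le_ciSup (Set.Finite.bddAbove (Set.finite_range s)) L)
    have ha0 : 0 ≤ a := (hs.2 L).1
    have ha1 : a ≤ 1 := (hs.2 L).2
    rcases eq_or_lt_of_le ha0 with hzero | ha
    · -- a = 0 : right-hand side is ⊤
      simp only [hW_def]
      rw [← ha_def, ← hzero, ENNReal.ofReal_zero, zero_pow (Nat.succ_ne_zero m),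
        ENNReal.inv_zero, ENNReal.mul_top (by simpa using hc₀pos)]
      exact le_top
    · -- a > 0 : genuine estimate
      have hsub01 : Set.Icc a 1 ⊆ Set.Icc (0:ℝ) 1 := Set.Icc_subset_Icc ha0 le_rfl
      set r : ℝ := -((m:ℝ) + 3) / 2 with hr_def
      have hm0 : (0:ℝ) ≤ m := Nat.cast_nonneg m
      have hpt : ∀ t ∈ Set.Icc a 1, h t ≤ M ^ (m + 3) * t ^ r := by
        intro t ht
        have ht0 : 0 < t := lt_of_lt_of_le ha ht.1
        have hσ : Real.sqrt t / M ≤ σ t := hσb t (hsub01 ht)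
        have hst : 0 < Real.sqrt t / M := div_pos (Real.sqrt_pos.2 ht0) hM
        have h1 : (Real.sqrt t / M) ^ (m + 3) ≤ σ t ^ (m + 3) :=
          pow_le_pow_left₀ hst.le hσ _
        have h2 : (σ t ^ (m + 3))⁻¹ ≤ ((Real.sqrt t / M) ^ (m + 3))⁻¹ :=
          inv_anti₀ (pow_pos hst _) h1
        have h3 : ((Real.sqrt t / M) ^ (m + 3))⁻¹ = M ^ (m + 3) * (Real.sqrt t ^ (m + 3))⁻¹ := by
          rw [div_pow, inv_div, div_eq_mul_inv]
        have h4 : (Real.sqrt t ^ (m + 3))⁻¹ = t ^ r := by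
          rw [Real.sqrt_eq_rpow, ← Real.rpow_natCast (t ^ ((1:ℝ)/2)) (m + 3),
            ← Real.rpow_mul ht0.le, ← Real.rpow_neg ht0.le]
          congr 1
          push_cast
          rw [hr_def]; ring
        calc h t = (σ t ^ (m + 3))⁻¹ := rfl
          _ ≤ ((Real.sqrt t / M) ^ (m + 3))⁻¹ := h2
          _ = M ^ (m + 3) * t ^ r := by rw [h3, h4]
      have hint_g : IntegrableOn (fun t => M ^ (m + 3) * t ^ r) (Set.Icc a 1) := by
        apply ContinuousOn.integrableOn_compact isCompact_Icc
        exact continuousOn_const.mul (ContinuousOn.rpow_const continuousOn_id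
          (fun t ht => Or.inl (ne_of_gt (lt_of_lt_of_le ha ht.1))))
      have hh_nn : ∀ t ∈ Set.Icc a 1, 0 ≤ h t := by
        intro t ht
        have : (0:ℝ) ≤ σ t := le_trans (le_trans (by positivity) (hσb t (hsub01 ht))) le_rfl
        positivity
      have hint_h : IntegrableOn h (Set.Icc a 1) := by
        apply Integrable.mono' hint_g hhm.aestronglyMeasurable
        filter_upwards [ae_restrict_mem measurableSet_Icc] with t ht
        rw [Real.norm_eq_abs, abs_of_nonneg (hh_nn t ht)]
        exact hpt t ht
      set p : ℝ := -((m:ℝ) + 1) / 2 with hp_def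
      have hrp : r + 1 = p := by rw [hr_def, hp_def]; ring
      have hFle : F s ≤ 2 * M ^ (m + 3) / ((m:ℝ) + 1) * a ^ p := by
        have hrne : r ≠ -1 := by
          rw [hr_def]; intro hcon; nlinarith
        have h0not : (0:ℝ) ∉ Set.uIcc a 1 := by
          rw [Set.uIcc_of_le ha1]
          exact fun hmem => absurd hmem.1 (not_le.2 ha)
        have hap : 0 ≤ a ^ p := Real.rpow_nonneg ha0 p
        calc F s = ∫ t in Set.Icc a 1, h t := by rw [hF_def]; simp only [hsup_eq]
          _ ≤ ∫ t in Set.Icc a 1, M ^ (m + 3) * t ^ r :=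
              setIntegral_mono_on hint_h hint_g measurableSet_Icc hpt
          _ = M ^ (m + 3) * ∫ t in Set.Icc a 1, t ^ r := integral_const_mul _ _
          _ = M ^ (m + 3) * ∫ t in a..1, t ^ r := by
              rw [integral_Icc_eq_integral_Ioc, ← _root_.intervalIntegral.integral_of_le ha1]
          _ = M ^ (m + 3) * (((1:ℝ) ^ (r + 1) - a ^ (r + 1)) / (r + 1)) := by
              rw [_root_.integral_rpow (Or.inr ⟨hrne, h0not⟩)]
          _ = M ^ (m + 3) * ((a ^ p - 1) * (2 / ((m:ℝ) + 1))) := by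
              have hne : ((m:ℝ) + 1) ≠ 0 := by positivity
              have halg : ∀ X : ℝ, (1 - X) / (-((m:ℝ) + 1) / 2)
                  = (X - 1) * (2 / ((m:ℝ) + 1)) := by
                intro X
                have hne2 : (-1 + -(m:ℝ)) ≠ 0 := by
                  intro hc; rw [← hc] at hne; simp at hne
                  linarith [Nat.cast_nonneg (α := ℝ) m]
                field_simp
                ring
              rw [Real.one_rpow, hrp, hp_def, halg]
          _ ≤ M ^ (m + 3) * (a ^ p * (2 / ((m:ℝ) + 1))) := by
              apply mul_le_mul_of_nonneg_left _ (by positivity)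
              apply mul_le_mul_of_nonneg_right (by linarith) (by positivity)
          _ = 2 * M ^ (m + 3) / ((m:ℝ) + 1) * a ^ p := by ring
      have hF0 : 0 ≤ F s := by
        rw [hF_def]
        simp only [hsup_eq]
        exact setIntegral_nonneg measurableSet_Icc hh_nn
      have hFsq : F s ^ 2 ≤ c₀ * a ^ (-((m:ℝ) + 1)) := by
        have hsq : F s ^ 2 ≤ (2 * M ^ (m + 3) / ((m:ℝ) + 1) * a ^ p) ^ 2 :=
          pow_le_pow_left₀ hF0 hFle 2
        refine hsq.trans_eq ?_
        have : -((m:ℝ) + 1) = p + p := by rw [hp_def]; ring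
        rw [this, Real.rpow_add ha, hc₀_def]
        ring
      have hconv : a ^ (-((m:ℝ) + 1)) = (a ^ (m + 1 : ℕ))⁻¹ := by
        rw [← Real.rpow_natCast a (m + 1), ← Real.rpow_neg ha0]
        congr 1
        push_cast
        ring
      calc ENNReal.ofReal (F s ^ 2) ≤ ENNReal.ofReal (c₀ * (a ^ (m + 1 : ℕ))⁻¹) := by
            apply ENNReal.ofReal_le_ofReal
            rw [← hconv]; exact hFsq
        _ = ENNReal.ofReal c₀ * ENNReal.ofReal ((a ^ (m + 1 : ℕ))⁻¹) :=
            ENNReal.ofReal_mul hc₀pos.le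
        _ = W s := by
            rw [hW_def, ENNReal.ofReal_inv_of_pos (pow_pos ha _), ENNReal.ofReal_pow ha0]
  -- putting everything together
  have hI : ∫ s in S, F s ^ 2 ≤ c₀ := by
    rw [integral_eq_lintegral_of_nonneg_ae
      (Filter.Eventually.of_forall fun s => sq_nonneg (F s))
      ((hFm.pow_const 2).aestronglyMeasurable)]
    apply ENNReal.toReal_le_of_le_ofReal hc₀pos.le
    calc ∫⁻ s in S, ENNReal.ofReal (F s ^ 2) ≤ ∫⁻ s in S, W s :=
        setLIntegral_mono hWm hpoint
      _ = ENNReal.ofReal c₀ * ∫⁻ s in S, (ENNReal.ofReal (s L) ^ (m + 1))⁻¹ := by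
          have hmeas : Measurable fun s : Fin (m + 2) → ℝ =>
              (ENNReal.ofReal (s L) ^ (m + 1))⁻¹ := by
            apply Measurable.inv
            apply Measurable.pow_const
            exact ENNReal.measurable_ofReal.comp (measurable_pi_apply L)
          simp only [hW_def]
          rw [lintegral_const_mul _ hmeas]
      _ ≤ ENNReal.ofReal c₀ * 1 := by
          gcongr
          refine le_trans ?_ (aux_J m)
          apply lintegral_mono' (Measure.restrict_mono ?_ le_rfl) le_rfl
          intro s hs
          exact ⟨fun i => ⟨(hs.2 i).1, hs.1 (Fin.le_last i)⟩, (hs.2 L).2⟩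
      _ = ENNReal.ofReal c₀ := mul_one _
  have hfacpos : (0:ℝ) < ((m + 2).factorial : ℝ) := by
    exact_mod_cast Nat.factorial_pos (m + 2)
  have hsqrt : (1:ℝ) ≤ Real.sqrt ((m:ℝ) + 2) := by
    rw [show (1:ℝ) = Real.sqrt 1 from (Real.sqrt_one).symm]
    apply Real.sqrt_le_sqrt
    linarith [Nat.cast_nonneg (α := ℝ) m]
  calc (1 / ((m+2).factorial : ℝ)) * ∫ s in S, F s ^ 2
      ≤ (1 / ((m+2).factorial : ℝ)) * c₀ :=
        mul_le_mul_of_nonneg_left hI (by positivity)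
    _ ≤ 24 * Real.sqrt ((m+2 : ℕ) : ℝ) * M ^ (2 * (m + 2) + 2)
          / (((m+2).factorial : ℝ) * (((m+2 : ℕ) : ℝ) - 1) ^ 2)
          * (1 + 1 / ((m+2 : ℕ) : ℝ) - 4 / (((m+2 : ℕ) : ℝ) + 1)) := by
        rw [hc₀_def]
        push_cast
        exact aux_arith m hM hfacpos hsqrt
end
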